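/- Let 0 < p < 2 and β ≥ 0, and let w_j := (1 + log j)^β for j ≥ 1. Then there exist constants c, C > 0 such that for all n ≥ 2, c·n^{−(1/p−1/2)}·(log n)^{−β} ≤ σ_n(U(ℓ_p(w))) ≤ C·n^{−(1/p−1/2)}·(log n)^{−β}. -/

import Mathlib

open scoped BigOperators

/-- The `ℓ₂` norm of a real sequence. -/
noncomputable def l2norm (x : ℕ → ℝ) : ℝ := Real.sqrt (∑' j, (x j) ^ 2)

/-- The error of best `n`-term approximation of `x` in `ℓ₂`:
the infimum of `‖x - S‖_{ℓ₂}` over all sequences `S` supported on at most `n` indices. -/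
noncomputable def sigman (n : ℕ) (x : ℕ → ℝ) : ℝ :=
  sInf {e : ℝ | ∃ S : ℕ → ℝ, (Function.support S).Finite ∧
    (Function.support S).ncard ≤ n ∧ e = l2norm (fun j => x j - S j)}

/-- `xs` is the decreasing rearrangement of the absolute values of the entries of `x`:
it is nonincreasing and is obtained by rearranging `(|x j|)` via a bijection of the indices. -/
def IsDecRearrangement (x xs : ℕ → ℝ) : Prop :=
  Antitone xs ∧ ∃ e : ℕ ≃ ℕ, ∀ j, xs j = |x (e j)|

/-- The weighted `ℓ_p(w)` quasi-norm `(∑ |w_j x_j|^p)^(1/p)` (for `0 < p < ∞`). -/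
noncomputable def wnorm (p : ℝ) (w x : ℕ → ℝ) : ℝ := (∑' j, |w j * x j| ^ p) ^ (1 / p)

/-- `σ_n(U(ℓ_p(w)))`: the supremum of the best `n`-term approximation errors `σ_n(x)`
over the unit ball of `ℓ_p(w)` (consisting of those `x ∈ ℓ₂` with `‖x‖_{ℓ_p(w)} ≤ 1`). -/
noncomputable def sigmanU (p : ℝ) (w : ℕ → ℝ) (n : ℕ) : ℝ :=
  sSup {e : ℝ | ∃ x : ℕ → ℝ, Summable (fun j => (x j) ^ 2) ∧
    Summable (fun j => |w j * x j| ^ p) ∧ wnorm p w x ≤ 1 ∧ e = sigman n x}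

/-- Corollary 3.1: for `0 < p < 2`, `β ≥ 0` and weights `w_j = (1 + log j)^β`,
`σ_n(U(ℓ_p(w))) ≍ n^{-(1/p - 1/2)} (log n)^{-β}`. Here the sequence `w` is indexed
from `0`, so index `j` carries the weight `(1 + log (j+1))^β`. -/
lemma finite_superlevel {f : ℕ → ℝ} (hf : Summable f) {ε : ℝ} (hε : 0 < ε) :
    {j : ℕ | ε ≤ f j}.Finite := by
  have h := hf.tendsto_cofinite_zero.eventually_lt_const hε
  have h2 := Filter.eventually_cofinite.mp h
  convert h2 using 1
  ext j; simp [not_lt]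

lemma sigman_upper (p β : ℝ) (hp0 : 0 < p) (hp2 : p < 2) (hβ : 0 ≤ β)
    (n : ℕ) (hn : 2 ≤ n) (x : ℕ → ℝ) (hx2 : Summable (fun j => (x j) ^ 2))
    (hxw : Summable (fun j : ℕ => |(1 + Real.log ((j : ℝ) + 1)) ^ β * x j| ^ p))
    (hw1 : wnorm p (fun j => (1 + Real.log ((j : ℝ) + 1)) ^ β) x ≤ 1) :
    sigman n x ≤ (2:ℝ) ^ (1/p) * (n : ℝ) ^ (-(1/p - 1/2)) * Real.log n ^ (-β) := by
  set w : ℕ → ℝ := fun j => (1 + Real.log ((j : ℝ) + 1)) ^ β with hw_def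
  have hp0' : (0:ℝ) < p := hp0
  have hpne : p ≠ 0 := ne_of_gt hp0
  have hbase : ∀ j : ℕ, (1:ℝ) ≤ 1 + Real.log ((j : ℝ) + 1) := by
    intro j
    have hj : (0:ℝ) ≤ (j:ℝ) := Nat.cast_nonneg j
    have : (0:ℝ) ≤ Real.log ((j:ℝ)+1) := Real.log_nonneg (by linarith)
    linarith
  have hw_one : ∀ j, (1:ℝ) ≤ w j := fun j => Real.one_le_rpow (hbase j) hβ
  have hw_pos : ∀ j, (0:ℝ) < w j := fun j => lt_of_lt_of_le one_pos (hw_one j)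
  have hw_mono : ∀ {i j : ℕ}, i ≤ j → w i ≤ w j := by
    intro i j hij
    apply Real.rpow_le_rpow (by linarith [hbase i]) _ hβ
    have : Real.log ((i:ℝ)+1) ≤ Real.log ((j:ℝ)+1) :=
      Real.log_le_log (by positivity) (by
        have := (Nat.cast_le (α := ℝ)).mpr hij
        linarith)
    linarith
  -- numbers
  set N : ℕ := n / 2 with hNdef
  set M : ℕ := n - N with hMdef
  have hN1 : 1 ≤ N := by omega
  have hNM : N ≤ M := by omega
  have hNMn : N + M = n := by omega
  have hM0 : (0:ℝ) < (M:ℝ) := by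
    have : 1 ≤ M := by omega
    exact_mod_cast Nat.lt_of_lt_of_le Nat.zero_lt_one this
  have hMn2 : (n:ℝ)/2 ≤ (M:ℝ) := by
    have : n ≤ 2 * M := by omega
    have := (Nat.cast_le (α := ℝ)).mpr this
    push_cast at this
    linarith
  set W : ℝ := (1 + Real.log ((N : ℝ) + 1)) ^ β with hWdef
  have hWw : W = w N := rfl
  have hW1 : (1:ℝ) ≤ W := hw_one N
  have hW0 : (0:ℝ) < W := hw_pos N
  have hn1 : (1:ℝ) < (n:ℝ) := by exact_mod_cast Nat.lt_of_lt_of_le Nat.one_lt_two hn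
  have hlogn : 0 < Real.log n := Real.log_pos hn1
  have hWlog : Real.log n ≤ 1 + Real.log ((N:ℝ)+1) := by
    have h1 : (n:ℝ)/2 ≤ (N:ℝ)+1 := by
      have : n ≤ 2 * (N + 1) := by omega
      have := (Nat.cast_le (α := ℝ)).mpr this
      push_cast at this; linarith
    have h2 : Real.log ((n:ℝ)/2) ≤ Real.log ((N:ℝ)+1) :=
      Real.log_le_log (by positivity) h1
    rw [Real.log_div (by positivity) (by norm_num)] at h2
    have := Real.log_two_lt_d9
    linarith
  have hWn : Real.log n ^ β ≤ W := Real.rpow_le_rpow hlogn.le hWlog hβ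
  -- threshold
  set t : ℝ := W⁻¹ * (M:ℝ) ^ (-(1/p)) with htdef
  have ht0 : 0 < t := by positivity
  have hMp : ((M:ℝ) ^ (-(1/p))) ^ p = (M:ℝ)⁻¹ := by
    rw [← Real.rpow_mul (le_of_lt hM0), show (-(1/p))*p = -1 by field_simp,
      Real.rpow_neg_one]
  have htp : t ^ p = (W ^ p)⁻¹ * (M:ℝ)⁻¹ := by
    rw [htdef, Real.mul_rpow (by positivity) (by positivity),
      Real.inv_rpow hW0.le, hMp]
  -- the tsum is at most 1
  have tsum1 : ∑' j, |w j * x j| ^ p ≤ 1 := by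
    by_contra h
    push_neg at h
    have hs0 : (0:ℝ) < ∑' j, |w j * x j| ^ p := lt_trans one_pos h
    have : 1 < (∑' j, |w j * x j| ^ p) ^ (1/p) :=
      (Real.one_lt_rpow_iff_of_pos hs0).mpr (Or.inl ⟨h, by positivity⟩)
    rw [wnorm] at hw1
    linarith
  -- the approximant
  set S : ℕ → ℝ := fun j => if t < |x j| then x j else 0 with hSdef
  have hSsupp : Function.support S ⊆ {j | t ^ p ≤ |w j * x j| ^ p} := by
    intro j hj
    simp only [Function.mem_support, hSdef] at hj
    have hjt : t < |x j| := by
      by_contra hc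
      simp [hc] at hj
    have h1 : t ≤ |w j * x j| := by
      rw [abs_mul, abs_of_pos (hw_pos j)]
      calc t ≤ |x j| := hjt.le
        _ = 1 * |x j| := (one_mul _).symm
        _ ≤ w j * |x j| := by
            apply mul_le_mul_of_nonneg_right (hw_one j) (abs_nonneg _)
    exact Real.rpow_le_rpow ht0.le h1 hp0.le
  have hfin : (Function.support S).Finite :=
    (finite_superlevel hxw (by positivity : (0:ℝ) < t ^ p)).subset hSsupp
  -- cardinality of far part
  set Bset : Set ℕ := {j | N ≤ j ∧ t < |x j|} with hBdef
  have hB_sub : Bset ⊆ {j | (M:ℝ)⁻¹ ≤ |w j * x j| ^ p} := by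
    rintro j ⟨hjN, hjt⟩
    have h1 : (M:ℝ) ^ (-(1/p)) ≤ |w j * x j| := by
      rw [abs_mul, abs_of_pos (hw_pos j)]
      have hWt : W * t = (M:ℝ) ^ (-(1/p)) := by
        rw [htdef, ← mul_assoc, mul_inv_cancel₀ (ne_of_gt hW0), one_mul]
      calc (M:ℝ) ^ (-(1/p)) = W * t := hWt.symm
        _ ≤ w j * |x j| := by
            apply mul_le_mul (hw_mono hjN) hjt.le ht0.le (hw_pos j).le
    calc (M:ℝ)⁻¹ = ((M:ℝ) ^ (-(1/p))) ^ p := hMp.symm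
      _ ≤ |w j * x j| ^ p := Real.rpow_le_rpow (by positivity) h1 hp0.le
  have hBfin : Bset.Finite :=
    (finite_superlevel hxw (by positivity : (0:ℝ) < (M:ℝ)⁻¹)).subset hB_sub
  have hBcard : (hBfin.toFinset).card ≤ M := by
    have hterm : ∀ j ∈ hBfin.toFinset, (M:ℝ)⁻¹ ≤ |w j * x j| ^ p := by
      intro j hj
      exact hB_sub (hBfin.mem_toFinset.mp hj)
    have h1 : (hBfin.toFinset.card : ℝ) * (M:ℝ)⁻¹ ≤ ∑ j ∈ hBfin.toFinset, |w j * x j| ^ p := by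
      have := Finset.card_nsmul_le_sum hBfin.toFinset _ _ hterm
      simpa [nsmul_eq_mul] using this
    have h2 : ∑ j ∈ hBfin.toFinset, |w j * x j| ^ p ≤ ∑' j, |w j * x j| ^ p :=
      Summable.sum_le_tsum _ (fun i _ => by positivity) hxw
    have h3 : (hBfin.toFinset.card : ℝ) ≤ M := by
      rw [← mul_le_mul_iff_of_pos_right (inv_pos.mpr hM0)]
      calc (hBfin.toFinset.card : ℝ) * (M:ℝ)⁻¹ ≤ 1 := le_trans h1 (le_trans h2 tsum1)
        _ = (M:ℝ) * (M:ℝ)⁻¹ := by rw [mul_inv_cancel₀ (ne_of_gt hM0)]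
    exact_mod_cast h3
  have hcard : (Function.support S).ncard ≤ n := by
    have hsub : Function.support S ⊆ ↑(Finset.range N) ∪ Bset := by
      intro j hj
      simp only [Function.mem_support, hSdef] at hj
      have hjt : t < |x j| := by
        by_contra hc
        simp [hc] at hj
      rcases lt_or_ge j N with h | h
      · left; simpa using h
      · right; exact ⟨h, hjt⟩
    calc (Function.support S).ncard ≤ (↑(Finset.range N) ∪ Bset).ncard :=
          Set.ncard_le_ncard hsub (Set.Finite.union (Finset.range N).finite_toSet hBfin)
      _ ≤ (↑(Finset.range N) : Set ℕ).ncard + Bset.ncard := Set.ncard_union_le _ _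
      _ ≤ N + M := by
          apply add_le_add
          · rw [Set.ncard_coe_finset, Finset.card_range]
          · rw [Set.ncard_eq_toFinset_card Bset hBfin]
            exact hBcard
      _ = n := hNMn
  -- error function
  set g : ℕ → ℝ := fun j => (x j - S j) ^ 2 with hgdef
  have hg : ∀ j, g j = if t < |x j| then 0 else (x j) ^ 2 := by
    intro j
    simp only [hgdef, hSdef]
    split <;> ring
  have hg_nonneg : ∀ j, 0 ≤ g j := fun j => sq_nonneg _
  have hg_le : ∀ j, g j ≤ (x j) ^ 2 := by
    intro j; rw [hg j]; split
    · positivity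
    · exact le_refl _
  have hg_sum : Summable g := Summable.of_nonneg_of_le hg_nonneg hg_le hx2
  set u : ℕ → ℝ := fun j => if j < N then t ^ 2 else 0 with hudef
  set v : ℕ → ℝ := fun j => t ^ (2 - p) * (W ^ p)⁻¹ * |w j * x j| ^ p with hvdef
  have hu_sum : Summable u := by
    apply summable_of_finite_support
    apply (Finset.range N).finite_toSet.subset
    intro j hj
    simp only [Function.mem_support, hudef] at hj
    simp only [Finset.coe_range, Set.mem_Iio]
    by_contra hc
    exact hj (by simp [hc])
  have hv_sum : Summable v := hxw.mul_left _
  have hpoint : ∀ j, g j ≤ u j + v j := by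
    intro j
    have hv0 : 0 ≤ v j := by
      simp only [hvdef]
      positivity
    have hu0 : 0 ≤ u j := by
      simp only [hudef]; split <;> positivity
    rw [hg j]
    split
    · positivity
    · rename_i hjt
      push_neg at hjt
      rcases lt_or_ge j N with hjN | hjN
      · have hsq : (x j)^2 ≤ t^2 := by
          rw [← sq_abs]
          exact pow_le_pow_left₀ (abs_nonneg _) hjt 2
        have : u j = t ^ 2 := by simp only [hudef, if_pos hjN]
        linarith
      · have hu' : u j = 0 := by simp only [hudef, if_neg (not_lt.mpr hjN)]
        rw [hu', zero_add]
        rcases eq_or_ne (x j) 0 with h0 | h0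
        · rw [h0]; simpa using hv0
        · have hxj : 0 < |x j| := abs_pos.mpr h0
          have hWp0 : (0:ℝ) < W ^ p := Real.rpow_pos_of_pos hW0 p
          have e1 : (x j)^2 = |x j| ^ (2-p) * |x j| ^ p := by
            rw [← Real.rpow_add hxj, show (2:ℝ) - p + p = 2 by ring, Real.rpow_two, sq_abs]
          have e2 : |x j| ^ (2-p) ≤ t ^ (2-p) :=
            Real.rpow_le_rpow (abs_nonneg _) hjt (by linarith)
          have habs : |w j * x j| ^ p = w j ^ p * |x j| ^ p := by
            rw [abs_mul, abs_of_pos (hw_pos j), Real.mul_rpow (hw_pos j).le (abs_nonneg _)]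
          have hwp : W ^ p ≤ w j ^ p :=
            Real.rpow_le_rpow hW0.le (hWw ▸ hw_mono hjN) hp0.le
          have e3 : |x j| ^ p ≤ (W^p)⁻¹ * |w j * x j| ^ p := by
            calc |x j| ^ p = (W^p)⁻¹ * W^p * |x j| ^ p := by
                  rw [inv_mul_cancel₀ (ne_of_gt hWp0), one_mul]
              _ ≤ (W^p)⁻¹ * w j ^ p * |x j| ^ p := by
                  apply mul_le_mul_of_nonneg_right _ (by positivity)
                  exact mul_le_mul_of_nonneg_left hwp (by positivity)
              _ = (W^p)⁻¹ * |w j * x j| ^ p := by rw [habs, mul_assoc]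
          calc (x j)^2 = |x j| ^ (2-p) * |x j| ^ p := e1
            _ ≤ t ^ (2-p) * ((W^p)⁻¹ * |w j * x j| ^ p) := by
                apply mul_le_mul e2 e3 (by positivity) (by positivity)
            _ = v j := by simp only [hvdef]; ring
  have htsum_u : ∑' j, u j = (N:ℝ) * t ^ 2 := by
    rw [tsum_eq_sum (s := Finset.range N) (by
      intro b hb
      simp only [hudef]
      rw [if_neg]
      simpa using hb)]
    rw [Finset.sum_congr rfl (fun j hj => by
      simp only [hudef]
      rw [if_pos (Finset.mem_range.mp hj)])]
    rw [Finset.sum_const, Finset.card_range, nsmul_eq_mul]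
  have htsum_v : ∑' j, v j ≤ t ^ (2-p) * (W^p)⁻¹ := by
    simp only [hvdef]
    rw [tsum_mul_left]
    calc (t^(2-p) * (W^p)⁻¹) * ∑' j, |w j * x j| ^ p ≤ (t^(2-p)*(W^p)⁻¹) * 1 :=
        mul_le_mul_of_nonneg_left tsum1 (by positivity)
      _ = _ := mul_one _
  have hNt : (N:ℝ) * t ^ 2 ≤ t ^ (2-p) * (W^p)⁻¹ := by
    have ht2 : t ^ 2 = t^(2-p) * t^p := by
      rw [← Real.rpow_add ht0, show (2:ℝ)-p+p = 2 by ring, Real.rpow_two]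
    have hNM' : (N:ℝ) ≤ (M:ℝ) := Nat.cast_le.mpr hNM
    have hinv : (N:ℝ) * (M:ℝ)⁻¹ ≤ 1 := by
      calc (N:ℝ) * (M:ℝ)⁻¹ ≤ (M:ℝ) * (M:ℝ)⁻¹ :=
            mul_le_mul_of_nonneg_right hNM' (by positivity)
        _ = 1 := mul_inv_cancel₀ (ne_of_gt hM0)
    calc (N:ℝ) * t^2 = t^(2-p) * (W^p)⁻¹ * ((N:ℝ) * (M:ℝ)⁻¹) := by
          rw [ht2, htp]; ring
      _ ≤ t^(2-p) * (W^p)⁻¹ * 1 := by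
          apply mul_le_mul_of_nonneg_left hinv (by positivity)
      _ = t^(2-p) * (W^p)⁻¹ := mul_one _
  have htotal : ∑' j, g j ≤ 2 * (t ^ (2-p) * (W^p)⁻¹) := by
    calc ∑' j, g j ≤ ∑' j, (u j + v j) := Summable.tsum_le_tsum hpoint hg_sum (hu_sum.add hv_sum)
      _ = ∑' j, u j + ∑' j, v j := Summable.tsum_add hu_sum hv_sum
      _ ≤ t^(2-p) * (W^p)⁻¹ + t^(2-p) * (W^p)⁻¹ := add_le_add (htsum_u ▸ hNt) htsum_v
      _ = 2 * (t ^ (2-p) * (W^p)⁻¹) := by ring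
  set B : ℝ := (2:ℝ)^(1/p) * (n:ℝ)^(-(1/p-1/2)) * Real.log n ^ (-β) with hBdef2
  have hB0 : (0:ℝ) ≤ B := by positivity
  have ht2p : t ^ (2-p) = (W^(2-p))⁻¹ * (M:ℝ) ^ ((p-2)/p) := by
    rw [htdef, Real.mul_rpow (by positivity) (by positivity), Real.inv_rpow hW0.le,
      ← Real.rpow_mul hM0.le]
    congr 1
    field_simp
    rw [show -((2-p)/p) = (p-2)/p by ring]
  have hW2 : (W^(2-p))⁻¹ * (W^p)⁻¹ = ((W:ℝ)^(2:ℕ))⁻¹ := by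
    rw [← mul_inv, ← Real.rpow_add hW0, show (2:ℝ)-p+p = 2 by ring, Real.rpow_two]
  have hB2 : B^2 = (2:ℝ)^(2/p) * (n:ℝ)^((p-2)/p) * (Real.log n ^ (2*β))⁻¹ := by
    rw [hBdef2, mul_pow, mul_pow]
    congr 1
    · congr 1
      · rw [← Real.rpow_natCast ((2:ℝ)^(1/p)) 2, ← Real.rpow_mul (by norm_num)]
        congr 1
        push_cast
        field_simp
      · rw [← Real.rpow_natCast ((n:ℝ)^(-(1/p-1/2))) 2, ← Real.rpow_mul (by positivity)]
        congr 1
        push_cast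
        field_simp
        ring
    · rw [← Real.rpow_natCast (Real.log n ^ (-β)) 2, ← Real.rpow_mul hlogn.le,
        ← Real.rpow_neg hlogn.le]
      congr 1
      push_cast
      ring
  have fact1 : ((W:ℝ)^(2:ℕ))⁻¹ ≤ (Real.log n ^ (2*β))⁻¹ := by
    apply inv_anti₀ (by positivity)
    calc Real.log n ^ (2*β) = (Real.log n ^ β) ^ (2:ℕ) := by
          rw [← Real.rpow_natCast (Real.log n ^ β) 2, ← Real.rpow_mul hlogn.le]
          congr 1
          push_cast
          ring
      _ ≤ W ^ (2:ℕ) := pow_le_pow_left₀ (by positivity) hWn 2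
  have hz : (p-2)/p ≤ 0 := by
    apply div_nonpos_of_nonpos_of_nonneg <;> linarith
  have fact2 : (M:ℝ)^((p-2)/p) ≤ (2:ℝ)^((2-p)/p) * (n:ℝ)^((p-2)/p) := by
    calc (M:ℝ)^((p-2)/p) ≤ ((n:ℝ)/2)^((p-2)/p) :=
          Real.rpow_le_rpow_of_nonpos (by positivity) hMn2 hz
      _ = (n:ℝ)^((p-2)/p) / (2:ℝ)^((p-2)/p) :=
          Real.div_rpow (by positivity) (by norm_num) _
      _ = (2:ℝ)^((2-p)/p) * (n:ℝ)^((p-2)/p) := by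
          rw [div_eq_mul_inv, ← Real.rpow_neg (by norm_num : (0:ℝ) ≤ 2),
            show -((p-2)/p) = (2-p)/p by ring]
          ring
  have fact3 : 2 * (2:ℝ)^((2-p)/p) = (2:ℝ)^(2/p) := by
    nth_rewrite 1 [show (2:ℝ) = (2:ℝ)^(1:ℝ) by rw [Real.rpow_one]]
    rw [← Real.rpow_add (by norm_num : (0:ℝ) < 2)]
    congr 1
    field_simp
    ring
  have hkey : 2 * (t ^ (2-p) * (W^p)⁻¹) ≤ B ^ 2 := by
    calc 2 * (t^(2-p) * (W^p)⁻¹)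
        = 2 * ((W^(2-p))⁻¹ * (W^p)⁻¹) * (M:ℝ)^((p-2)/p) := by rw [ht2p]; ring
      _ = 2 * ((W:ℝ)^(2:ℕ))⁻¹ * (M:ℝ)^((p-2)/p) := by rw [hW2]
      _ ≤ 2 * (Real.log n ^ (2*β))⁻¹ * ((2:ℝ)^((2-p)/p) * (n:ℝ)^((p-2)/p)) := by
          apply mul_le_mul (mul_le_mul_of_nonneg_left fact1 (by norm_num)) fact2
            (by positivity) (by positivity)
      _ = (2 * (2:ℝ)^((2-p)/p)) * (n:ℝ)^((p-2)/p) * (Real.log n ^ (2*β))⁻¹ := by ring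
      _ = B^2 := by rw [fact3, hB2]
  have h1 : sigman n x ≤ l2norm (fun j => x j - S j) := by
    unfold sigman
    apply csInf_le
    · refine ⟨0, ?_⟩
      rintro e ⟨S', -, -, rfl⟩
      exact Real.sqrt_nonneg _
    · exact ⟨S, hfin, hcard, rfl⟩
  have h2 : l2norm (fun j => x j - S j) ≤ B := by
    show Real.sqrt (∑' j, g j) ≤ B
    calc Real.sqrt (∑' j, g j) ≤ Real.sqrt (B^2) :=
          Real.sqrt_le_sqrt (le_trans htotal hkey)
      _ = B := Real.sqrt_sq hB0
  exact le_trans h1 h2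

theorem sigmanU_log_weights (p β : ℝ) (hp0 : 0 < p) (hp2 : p < 2) (hβ : 0 ≤ β) :
    ∃ c C : ℝ, 0 < c ∧ 0 < C ∧ ∀ n : ℕ, 2 ≤ n →
      c * (n : ℝ) ^ (-(1 / p - 1 / 2)) * Real.log n ^ (-β) ≤
          sigmanU p (fun j => (1 + Real.log ((j : ℝ) + 1)) ^ β) n ∧
        sigmanU p (fun j => (1 + Real.log ((j : ℝ) + 1)) ^ β) n ≤
          C * (n : ℝ) ^ (-(1 / p - 1 / 2)) * Real.log n ^ (-β) := by
  have hpne : p ≠ 0 := ne_of_gt hp0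
  refine ⟨(2:ℝ)^(-(1/p)) * (4:ℝ)^(-β), (2:ℝ)^(1/p), by positivity, by positivity, ?_⟩
  intro n hn
  set w : ℕ → ℝ := fun j => (1 + Real.log ((j : ℝ) + 1)) ^ β with hw_def
  have hn1 : (1:ℝ) < (n:ℝ) := by exact_mod_cast Nat.lt_of_lt_of_le Nat.one_lt_two hn
  have hn0 : (0:ℝ) < (n:ℝ) := lt_trans one_pos hn1
  have hlogn : 0 < Real.log n := Real.log_pos hn1
  set B : ℝ := (2:ℝ)^(1/p) * (n:ℝ)^(-(1/p-1/2)) * Real.log n ^ (-β) with hBdef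
  have hB0 : (0:ℝ) ≤ B := by positivity
  have hupper_all : ∀ e ∈ {e : ℝ | ∃ x : ℕ → ℝ, Summable (fun j => (x j) ^ 2) ∧
      Summable (fun j => |w j * x j| ^ p) ∧ wnorm p w x ≤ 1 ∧ e = sigman n x}, e ≤ B := by
    rintro e ⟨x, h1, h2, h3, rfl⟩
    exact sigman_upper p β hp0 hp2 hβ n hn x h1 h2 h3
  have hupper : sigmanU p w n ≤ B := Real.sSup_le hupper_all hB0
  constructor
  swap
  · exact hupper
  -- lower bound
  · set L : ℝ := 1 + Real.log (2*(n:ℝ)) with hLdef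
    have hlog2n : 0 ≤ Real.log (2*(n:ℝ)) := Real.log_nonneg (by linarith)
    have hL1 : (1:ℝ) ≤ L := by rw [hLdef]; linarith
    have hL0 : (0:ℝ) < L := lt_of_lt_of_le one_pos hL1
    set a : ℝ := (2*(n:ℝ))^(-(1/p)) * L^(-β) with hadef
    have ha0 : 0 < a := by positivity
    set x0 : ℕ → ℝ := fun j => if j < 2*n then a else 0 with hx0def
    have hx0supp : Function.support x0 ⊆ ↑(Finset.range (2*n)) := by
      intro j hj
      simp only [Function.mem_support, hx0def] at hj
      simp only [Finset.coe_range, Set.mem_Iio]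
      by_contra hc
      exact hj (by simp [hc])
    have hsum2 : Summable (fun j => (x0 j) ^ 2) := by
      apply summable_of_finite_support
      apply (Finset.range (2*n)).finite_toSet.subset
      intro j hj
      simp only [Function.mem_support] at hj
      apply hx0supp
      simp only [Function.mem_support]
      intro hc
      exact hj (by rw [hc]; ring)
    have hsumw : Summable (fun j => |w j * x0 j| ^ p) := by
      apply summable_of_finite_support
      apply (Finset.range (2*n)).finite_toSet.subset
      intro j hj
      simp only [Function.mem_support] at hj
      apply hx0supp
      simp only [Function.mem_support]
      intro hc
      exact hj (by rw [hc, mul_zero, abs_zero, Real.zero_rpow hpne])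
    -- weight bound on range
    have hwL : ∀ j < 2*n, w j ≤ L ^ β := by
      intro j hj
      apply Real.rpow_le_rpow (by
        have : (0:ℝ) ≤ Real.log ((j:ℝ)+1) := Real.log_nonneg (by
          have : (0:ℝ) ≤ (j:ℝ) := Nat.cast_nonneg j
          linarith)
        linarith) _ hβ
      have hcast : ((j:ℝ)+1) ≤ 2*(n:ℝ) := by
        have : (j:ℕ)+1 ≤ 2*n := hj
        exact_mod_cast this
      have := Real.log_le_log (by positivity) hcast
      rw [hLdef]
      linarith
    have hterm_val : (L^β * a) ^ p = (2*(n:ℝ))⁻¹ := by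
      have h1 : L^β * a = (2*(n:ℝ))^(-(1/p)) := by
        rw [hadef,
          show L^β * ((2*(n:ℝ))^(-(1/p)) * L^(-β)) = (L^β * L^(-β)) * (2*(n:ℝ))^(-(1/p)) by ring,
          ← Real.rpow_add hL0, show β + -β = 0 by ring, Real.rpow_zero, one_mul]
      rw [h1, ← Real.rpow_mul (by positivity), show (-(1/p))*p = -1 by field_simp,
        Real.rpow_neg_one]
    have htsum_eq : ∑' j, |w j * x0 j| ^ p = ∑ j ∈ Finset.range (2*n), |w j * x0 j| ^ p := by
      apply tsum_eq_sum
      intro b hb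
      have hb' : ¬ b < 2*n := by simpa using hb
      simp only [hx0def, if_neg hb', mul_zero, abs_zero]
      exact Real.zero_rpow hpne
    have htsum_le : ∑' j, |w j * x0 j| ^ p ≤ 1 := by
      rw [htsum_eq]
      have hbound : ∀ j ∈ Finset.range (2*n), |w j * x0 j| ^ p ≤ (2*(n:ℝ))⁻¹ := by
        intro j hj
        have hjlt := Finset.mem_range.mp hj
        have hwj : 0 < w j := Real.rpow_pos_of_pos (by
          have : (0:ℝ) ≤ Real.log ((j:ℝ)+1) := Real.log_nonneg (by
            have : (0:ℝ) ≤ (j:ℝ) := Nat.cast_nonneg j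
            linarith)
          linarith) β
        simp only [hx0def, if_pos hjlt]
        rw [abs_mul, abs_of_pos hwj, abs_of_pos ha0, ← hterm_val]
        exact Real.rpow_le_rpow (by positivity)
          (mul_le_mul_of_nonneg_right (hwL j hjlt) ha0.le) hp0.le
      calc ∑ j ∈ Finset.range (2*n), |w j * x0 j| ^ p
          ≤ ∑ _j ∈ Finset.range (2*n), (2*(n:ℝ))⁻¹ := Finset.sum_le_sum hbound
        _ = (2*n : ℕ) * (2*(n:ℝ))⁻¹ := by
            rw [Finset.sum_const, Finset.card_range, nsmul_eq_mul]
        _ = 1 := by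
            push_cast
            field_simp
    have hwnorm : wnorm p w x0 ≤ 1 := by
      rw [wnorm]
      exact Real.rpow_le_one (tsum_nonneg (fun j => by positivity)) htsum_le (by positivity)
    -- lower bound for sigman n x0
    have hsig_low : Real.sqrt n * a ≤ sigman n x0 := by
      unfold sigman
      apply le_csInf
      · refine ⟨l2norm (fun j => x0 j - (fun _ => (0:ℝ)) j), (fun _ => (0:ℝ)), ?_, ?_, rfl⟩
        · simp [Function.support]
        · simp [Function.support]
      · rintro e ⟨S, hSf, hScard, rfl⟩
        set F : Finset ℕ := hSf.toFinset with hFdef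
        set T : Finset ℕ := Finset.range (2*n) \ F with hTdef
        have hFcard : F.card ≤ n := by
          rw [hFdef, ← Set.ncard_eq_toFinset_card _ hSf]
          exact hScard
        have hTcard : n ≤ T.card := by
          have h1 : (Finset.range (2*n)).card ≤ T.card + F.card :=
            Finset.card_le_card_sdiff_add_card
          rw [Finset.card_range] at h1
          omega
        have hterm : ∀ j ∈ T, a^2 ≤ (x0 j - S j)^2 := by
          intro j hj
          rw [hTdef, Finset.mem_sdiff] at hj
          obtain ⟨hj1, hj2⟩ := hj
          have hS0 : S j = 0 := by
            by_contra hc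
            exact hj2 (hSf.mem_toFinset.mpr hc)
          have hx0j : x0 j = a := by
            simp only [hx0def, if_pos (Finset.mem_range.mp hj1)]
          rw [hS0, hx0j, sub_zero]
        have hsummable : Summable (fun j => (x0 j - S j)^2) := by
          apply summable_of_finite_support
          apply (((Finset.range (2*n)).finite_toSet).union hSf).subset
          intro j hj
          simp only [Function.mem_support] at hj
          by_contra hc
          simp only [Set.mem_union, Finset.coe_range, Set.mem_Iio,
            Function.mem_support] at hc
          push_neg at hc
          obtain ⟨hc1, hc2⟩ := hc
          have hx0j : x0 j = 0 := by simp only [hx0def, if_neg (not_lt.mpr hc1)]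
          exact hj (by rw [hx0j, hc2]; ring)
        have hsum_ge : (n:ℝ) * a^2 ≤ ∑' j, (x0 j - S j)^2 := by
          calc (n:ℝ) * a^2 ≤ (T.card : ℝ) * a^2 := by
                apply mul_le_mul_of_nonneg_right _ (sq_nonneg a)
                exact_mod_cast hTcard
            _ ≤ ∑ j ∈ T, (x0 j - S j)^2 := by
                have := Finset.card_nsmul_le_sum T _ _ hterm
                simpa [nsmul_eq_mul] using this
            _ ≤ ∑' j, (x0 j - S j)^2 :=
                Summable.sum_le_tsum T (fun i _ => sq_nonneg _) hsummable
        show Real.sqrt n * a ≤ l2norm (fun j => x0 j - S j)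
        unfold l2norm
        calc Real.sqrt n * a = Real.sqrt ((n:ℝ) * a^2) := by
              rw [Real.sqrt_mul hn0.le, Real.sqrt_sq ha0.le]
          _ ≤ Real.sqrt (∑' j, (x0 j - S j)^2) := Real.sqrt_le_sqrt hsum_ge
    have hmem : sigman n x0 ∈ {e : ℝ | ∃ x : ℕ → ℝ, Summable (fun j => (x j) ^ 2) ∧
        Summable (fun j => |w j * x j| ^ p) ∧ wnorm p w x ≤ 1 ∧ e = sigman n x} :=
      ⟨x0, hsum2, hsumw, hwnorm, rfl⟩
    have hlow : sigman n x0 ≤ sigmanU p w n := by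
      apply le_csSup ⟨B, fun e he => hupper_all e he⟩ hmem
    -- final arithmetic
    have hL4 : L ≤ 4 * Real.log n := by
      rw [hLdef, Real.log_mul (by norm_num) (ne_of_gt hn0)]
      have h2n : Real.log 2 ≤ Real.log n := Real.log_le_log (by norm_num) (by exact_mod_cast hn)
      have hgt := Real.log_two_gt_d9
      have hlt := Real.log_two_lt_d9
      nlinarith
    have hLb : (4:ℝ)^(-β) * Real.log n ^ (-β) ≤ L^(-β) := by
      calc (4:ℝ)^(-β) * Real.log n ^ (-β) = (4 * Real.log n)^(-β) :=
            (Real.mul_rpow (by norm_num) hlogn.le).symm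
        _ ≤ L^(-β) := Real.rpow_le_rpow_of_nonpos (by positivity) hL4 (by linarith)
    have hkey : Real.sqrt n * a = (2:ℝ)^(-(1/p)) * (n:ℝ)^(-(1/p-1/2)) * L^(-β) := by
      rw [Real.sqrt_eq_rpow, hadef,
        Real.mul_rpow (by norm_num : (0:ℝ) ≤ 2) hn0.le]
      rw [show (n:ℝ)^((1:ℝ)/2) * ((2:ℝ)^(-(1/p)) * (n:ℝ)^(-(1/p)) * L^(-β))
          = (2:ℝ)^(-(1/p)) * ((n:ℝ)^((1:ℝ)/2) * (n:ℝ)^(-(1/p))) * L^(-β) by ring]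
      rw [← Real.rpow_add hn0, show (1:ℝ)/2 + -(1/p) = -(1/p-1/2) by ring]
    calc (2:ℝ)^(-(1/p)) * (4:ℝ)^(-β) * (n:ℝ)^(-(1/p-1/2)) * Real.log n ^ (-β)
        = (2:ℝ)^(-(1/p)) * (n:ℝ)^(-(1/p-1/2)) * ((4:ℝ)^(-β) * Real.log n ^ (-β)) := by ring
      _ ≤ (2:ℝ)^(-(1/p)) * (n:ℝ)^(-(1/p-1/2)) * L^(-β) :=
          mul_le_mul_of_nonneg_left hLb (by positivity)
      _ = Real.sqrt n * a := hkey.symm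
      _ ≤ sigman n x0 := hsig_low
      _ ≤ sigmanU p w n := hlow
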